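/- arXiv:2010.05843 — 3 statements merged into one kernel-verified Lean document; each statement's English description precedes it below -/
import Mathlib

section
/- For γ > 1, the function g₂(γ) = 2γ²(4γ² − 3γ + 1)/(2γ − 1/2)³ satisfies g₂'(γ) < 1 for all γ > 1, and hence g₂(γ) ≤ g₂(1) + (γ − 1) = γ + 5/27 for all γ > 1. -/
/-- `g₂(γ) = 2γ²(4γ² − 3γ + 1)/(2γ − 1/2)³` has derivative `< 1` for all `γ > 1`, and hence
`g₂(γ) ≤ g₂(1) + (γ − 1) = γ + 5/27` for all `γ > 1`. -/
theorem g2_deriv_lt_one_and_bound :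
    (∀ γ : ℝ, 1 < γ →
        deriv (fun x : ℝ => 2 * x ^ 2 * (4 * x ^ 2 - 3 * x + 1) / (2 * x - 1 / 2) ^ 3) γ < 1) ∧
      ∀ γ : ℝ, 1 < γ →
        2 * γ ^ 2 * (4 * γ ^ 2 - 3 * γ + 1) / (2 * γ - 1 / 2) ^ 3 ≤ γ + 5 / 27 := by
  constructor
  · intro γ hγ
    have hb : (0:ℝ) < 2 * γ - 1 / 2 := by linarith
    have hD : ((2 * γ - 1 / 2) ^ 3 : ℝ) ≠ 0 := by positivity
    have hN : HasDerivAt (fun x : ℝ => 2 * x ^ 2 * (4 * x ^ 2 - 3 * x + 1))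
        (32 * γ ^ 3 - 18 * γ ^ 2 + 4 * γ) γ := by
      have h1 : HasDerivAt (fun x : ℝ => 2 * x ^ 2) (2 * (2 * γ ^ 1)) γ :=
        (hasDerivAt_pow 2 γ).const_mul 2
      have h2 : HasDerivAt (fun x : ℝ => 4 * x ^ 2 - 3 * x + 1)
          (4 * (2 * γ ^ 1) - 3 * 1) γ := by
        simpa using (((hasDerivAt_pow 2 γ).const_mul 4).sub
          ((hasDerivAt_id γ).const_mul 3)).add_const 1
      have := h1.mul h2
      exact this.congr_deriv (by ring)
    have hDd : HasDerivAt (fun x : ℝ => (2 * x - 1 / 2) ^ 3)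
        (6 * (2 * γ - 1 / 2) ^ 2) γ := by
      have h3 : HasDerivAt (fun x : ℝ => 2 * x - 1 / 2) 2 γ := by
        simpa using ((hasDerivAt_id γ).const_mul 2).sub_const (1 / 2)
      have := h3.pow 3
      exact this.congr_deriv (by ring)
    have hdiv := hN.div hDd hD
    rw [HasDerivAt.deriv (f := fun x : ℝ => 2 * x ^ 2 * (4 * x ^ 2 - 3 * x + 1) / (2 * x - 1 / 2) ^ 3) hdiv]
    rw [div_lt_one (by positivity)]
    have h4 : (0:ℝ) < (2 * γ - 1 / 2) ^ 2 := by positivity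
    nlinarith [mul_pos h4 (mul_pos hb hb), sq_nonneg γ, mul_pos h4 hb,
      mul_pos (mul_pos h4 hb) (sub_pos.mpr hγ)]
  · intro γ hγ
    have hb : (0:ℝ) < 2 * γ - 1 / 2 := by linarith
    rw [div_le_iff₀ (by positivity)]
    nlinarith [sq_nonneg γ, sq_nonneg (γ - 1), sub_pos.mpr hγ,
      mul_pos (sub_pos.mpr hγ) (mul_pos hb hb)]
end

section
/- For γ = 1, the infimum over λ > 0 of f(λ, 1) = 8λ / ((λ + 2 − √(λ² + 4λ))² · (λ² + 4λ)^{3/2}) equals 32/27. -/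
lemma rpow_three_halves (x : ℝ) (hx : 0 ≤ x) :
    x ^ ((3 : ℝ) / 2) = Real.sqrt x ^ 3 := by
  rw [Real.sqrt_eq_rpow, ← Real.rpow_natCast (x ^ ((1:ℝ)/2)) 3,
    ← Real.rpow_mul hx]
  norm_num

/-- For `γ = 1`, the infimum over `λ > 0` of
`f(λ,1) = 8λ/((λ + 2 − √(λ²+4λ))² (λ²+4λ)^{3/2})` equals `32/27`. -/
theorem inf_f_at_gamma_one :
    IsGLB {y : ℝ | ∃ l : ℝ, 0 < l ∧
        y = 8 * l / ((l + 2 - Real.sqrt (l ^ 2 + 4 * l)) ^ 2 *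
          (l ^ 2 + 4 * l) ^ ((3 : ℝ) / 2))}
      (32 / 27) := by
  constructor
  · -- lower bound
    rintro y ⟨l, hl, rfl⟩
    set s := Real.sqrt (l ^ 2 + 4 * l) with hs
    have hq : (0:ℝ) < l ^ 2 + 4 * l := by positivity
    have hs2 : s ^ 2 = l ^ 2 + 4 * l := Real.sq_sqrt hq.le
    have hs0 : 0 < s := Real.sqrt_pos.2 hq
    have hlt : s < l + 2 := by
      rw [hs, show l + 2 = Real.sqrt ((l+2)^2) from (Real.sqrt_sq (by linarith)).symm]
      apply Real.sqrt_lt_sqrt hq.le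
      nlinarith
    have hd : 0 < l + 2 - s := by linarith
    have hrpow : (l ^ 2 + 4 * l) ^ ((3 : ℝ) / 2) = s ^ 3 :=
      rpow_three_halves _ hq.le
    rw [hrpow]
    have hDpos : 0 < (l + 2 - s) ^ 2 * s ^ 3 := by positivity
    -- key inequality
    have hP : (10*l+148)^2 * s^2 ≤ (54*l^2+216*l+108)^2 := by
      rw [hs2]
      nlinarith [mul_nonneg (sq_nonneg (2*l-1))
        (show (0:ℝ) ≤ 704*l^2+5696*l+11664 by positivity)]
    have hab : (0:ℝ) < (54*l^2+216*l+108) + (10*l+148)*s := by positivity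
    have h1 : (10*l+148)*s ≤ 54*l^2+216*l+108 := by nlinarith [hP, hab]
    have hs3 : s ^ 3 = (l^2+4*l) * s := by
      rw [pow_succ, hs2]
    have key2 : 64 * s ^ 3 ≤ 27 * (l * (l+2+s)^2) := by
      nlinarith [mul_le_mul_of_nonneg_left h1 hl.le, hs2, hs3, hs0.le]
    have hid : (l+2-s)^2 * (l+2+s)^2 = 16 := by
      have h : ((l+2)^2 - s^2)^2 = 16 := by rw [hs2]; ring
      nlinarith [h]
    have key3 : 64 * ((l+2-s)^2 * s^3) ≤ 432 * l := by
      calc 64 * ((l+2-s)^2 * s^3) = (l+2-s)^2 * (64 * s^3) := by ring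
        _ ≤ (l+2-s)^2 * (27 * (l * (l+2+s)^2)) :=
            mul_le_mul_of_nonneg_left key2 (sq_nonneg _)
        _ = 27 * l * ((l+2-s)^2 * (l+2+s)^2) := by ring
        _ = 432 * l := by rw [hid]; ring
    rw [le_div_iff₀ hDpos]
    linarith
  · -- greatest: 32/27 is in the set (attained at l = 1/2)
    intro b hb
    apply hb
    refine ⟨1/2, by norm_num, ?_⟩
    have h1 : ((1:ℝ)/2) ^ 2 + 4 * (1/2) = 9/4 := by norm_num
    have h2 : Real.sqrt (9/4) = 3/2 := by
      rw [show (9/4:ℝ) = (3/2)^2 by norm_num, Real.sqrt_sq (by norm_num)]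
    have h3 : ((9:ℝ)/4) ^ ((3:ℝ)/2) = 27/8 := by
      rw [rpow_three_halves _ (by norm_num), h2]; norm_num
    rw [h1, h2, h3]
    norm_num
end

section
/- For positive reals λ and γ, define f(λ, γ) = 4γ²[(γ−1)² + (γ+1)λ] / [(λ+1+γ − √((λ+γ+1)² − 4γ))² · ((λ+γ+1)² − 4γ)^{3/2}]. Then inf over λ > 0 of f(λ, γ) ≤ max{1 + (5/27)γ, (5/27) + γ}; specifically, f(1 − γ/2, γ) = 2(γ² − 3γ + 4)/(2 − γ/2)³ ≤ 1 + (5/27)γ for γ ∈ (0, 1], and f(γ − 1/2, γ) = 2γ²(4γ² − 3γ + 1)/(2γ − 1/2)³ ≤ γ + 5/27 for γ > 1. -/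
noncomputable def asymMSEtrtr (lam γ : ℝ) : ℝ :=
  4 * γ ^ 2 * ((γ - 1) ^ 2 + (γ + 1) * lam) /
    ((lam + 1 + γ - Real.sqrt ((lam + γ + 1) ^ 2 - 4 * γ)) ^ 2 *
      ((lam + γ + 1) ^ 2 - 4 * γ) ^ ((3 : ℝ) / 2))

lemma sq_rpow_three_halves {x : ℝ} (hx : 0 ≤ x) :
    ((x ^ 2 : ℝ)) ^ ((3 : ℝ) / 2) = x ^ 3 := by
  rw [← Real.rpow_natCast x 2, ← Real.rpow_mul hx]
  norm_num

lemma asym_nonneg {lam γ : ℝ} (hγ : 0 < γ) (hlam : 0 < lam) :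
    0 ≤ asymMSEtrtr lam γ := by
  unfold asymMSEtrtr
  apply div_nonneg
  · positivity
  · rcases le_or_gt 0 ((lam + γ + 1) ^ 2 - 4 * γ) with h | h
    · positivity
    · rw [Real.rpow_def_of_neg h]
      have hc : Real.cos ((3:ℝ)/2 * Real.pi) = 0 := by
        rw [show (3:ℝ)/2 * Real.pi = Real.pi + Real.pi/2 by ring]
        simp [Real.cos_add]
      rw [hc]
      ring_nf
      simp

lemma asym_low {γ : ℝ} (hγ : 0 < γ) (hγ1 : γ ≤ 1) :
    asymMSEtrtr (1 - γ / 2) γ = 2 * (γ ^ 2 - 3 * γ + 4) / (2 - γ / 2) ^ 3 := by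
  have h2 : (0:ℝ) < 2 - γ / 2 := by linarith
  have harg : (1 - γ / 2 + γ + 1) ^ 2 - 4 * γ = (2 - γ / 2) ^ 2 := by ring
  have hs : Real.sqrt ((1 - γ / 2 + γ + 1) ^ 2 - 4 * γ) = 2 - γ / 2 := by
    rw [harg, Real.sqrt_sq h2.le]
  unfold asymMSEtrtr
  rw [hs, harg, sq_rpow_three_halves h2.le,
    show (1 - γ / 2 + 1 + γ - (2 - γ / 2)) = γ by ring]
  rw [div_eq_div_iff (by positivity) (by positivity)]
  ring

lemma asym_high {γ : ℝ} (hγ : 1 < γ) :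
    asymMSEtrtr (γ - 1 / 2) γ = 2 * γ ^ 2 * (4 * γ ^ 2 - 3 * γ + 1) / (2 * γ - 1 / 2) ^ 3 := by
  have h2 : (0:ℝ) < 2 * γ - 1 / 2 := by linarith
  have harg : (γ - 1 / 2 + γ + 1) ^ 2 - 4 * γ = (2 * γ - 1 / 2) ^ 2 := by ring
  have hs : Real.sqrt ((γ - 1 / 2 + γ + 1) ^ 2 - 4 * γ) = 2 * γ - 1 / 2 := by
    rw [harg, Real.sqrt_sq h2.le]
  unfold asymMSEtrtr
  rw [hs, harg, sq_rpow_three_halves h2.le,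
    show (γ - 1 / 2 + 1 + γ - (2 * γ - 1 / 2)) = 1 by ring]
  rw [div_eq_div_iff (by positivity) (by positivity)]
  ring

lemma low_bound {γ : ℝ} (hγ : 0 < γ) (hγ1 : γ ≤ 1) :
    2 * (γ ^ 2 - 3 * γ + 4) / (2 - γ / 2) ^ 3 ≤ 1 + (5 / 27) * γ := by
  have h2 : (0:ℝ) < 2 - γ / 2 := by linarith
  rw [div_le_iff₀ (by positivity)]
  nlinarith [mul_nonneg hγ.le (sub_nonneg.2 hγ1), sq_nonneg γ,
    mul_nonneg (mul_nonneg hγ.le (sub_nonneg.2 hγ1)) (sq_nonneg (γ - 3)),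
    mul_nonneg (mul_nonneg hγ.le (sub_nonneg.2 hγ1)) (sq_nonneg γ)]

lemma high_bound {γ : ℝ} (hγ : 1 < γ) :
    2 * γ ^ 2 * (4 * γ ^ 2 - 3 * γ + 1) / (2 * γ - 1 / 2) ^ 3 ≤ γ + 5 / 27 := by
  have h2 : (0:ℝ) < 2 * γ - 1 / 2 := by linarith
  rw [div_le_iff₀ (by positivity)]
  nlinarith [sub_nonneg.2 hγ.le, mul_nonneg (sub_nonneg.2 hγ.le) (sq_nonneg (γ - 1)),
    mul_nonneg (sub_nonneg.2 hγ.le) (sq_nonneg γ), sq_nonneg (γ - 1)]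

/-- The infimum over `λ > 0` of the non-splitting asymptotic MSE coefficient `f(λ,γ)` is at most
`max{1 + (5/27)γ, 5/27 + γ}`; specifically `f(1 − γ/2, γ) = 2(γ²−3γ+4)/(2−γ/2)³ ≤ 1 + (5/27)γ`
for `γ ∈ (0,1]` and `f(γ − 1/2, γ) = 2γ²(4γ²−3γ+1)/(2γ−1/2)³ ≤ γ + 5/27` for `γ > 1`. -/
theorem trtr_optimal_rate_upper_bound (γ : ℝ) (hγ : 0 < γ) :
    sInf {y : ℝ | ∃ lam : ℝ, 0 < lam ∧ y = asymMSEtrtr lam γ}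
        ≤ max (1 + (5 / 27) * γ) (5 / 27 + γ) ∧
      (γ ≤ 1 →
        asymMSEtrtr (1 - γ / 2) γ = 2 * (γ ^ 2 - 3 * γ + 4) / (2 - γ / 2) ^ 3 ∧
          asymMSEtrtr (1 - γ / 2) γ ≤ 1 + (5 / 27) * γ) ∧
      (1 < γ →
        asymMSEtrtr (γ - 1 / 2) γ = 2 * γ ^ 2 * (4 * γ ^ 2 - 3 * γ + 1) / (2 * γ - 1 / 2) ^ 3 ∧
          asymMSEtrtr (γ - 1 / 2) γ ≤ γ + 5 / 27) := by
  have hbdd : BddBelow {y : ℝ | ∃ lam : ℝ, 0 < lam ∧ y = asymMSEtrtr lam γ} := by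
    refine ⟨0, ?_⟩
    rintro y ⟨lam, hlam, rfl⟩
    exact asym_nonneg hγ hlam
  refine ⟨?_, fun h1 => ⟨asym_low hγ h1, (asym_low hγ h1).le.trans (low_bound hγ h1)⟩,
    fun h1 => ⟨asym_high h1, (asym_high h1).le.trans (high_bound h1)⟩⟩
  rcases le_or_gt γ 1 with h1 | h1
  · calc sInf {y : ℝ | ∃ lam : ℝ, 0 < lam ∧ y = asymMSEtrtr lam γ}
        ≤ asymMSEtrtr (1 - γ / 2) γ := csInf_le hbdd ⟨1 - γ / 2, by linarith, rfl⟩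
      _ ≤ 1 + (5 / 27) * γ := (asym_low hγ h1).le.trans (low_bound hγ h1)
      _ ≤ _ := le_max_left _ _
  · calc sInf {y : ℝ | ∃ lam : ℝ, 0 < lam ∧ y = asymMSEtrtr lam γ}
        ≤ asymMSEtrtr (γ - 1 / 2) γ := csInf_le hbdd ⟨γ - 1 / 2, by linarith, rfl⟩
      _ ≤ 5 / 27 + γ := by
          have := (asym_high h1).le.trans (high_bound h1); linarith
      _ ≤ _ := le_max_right _ _
end
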